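/- Post-selected effective map of the two-qubit weak-measurement step: Let S = {1, 2, 3}, G_1, G_2, G_3 ∈ ℂ^{N×N}, Ω := Σ_{α∈S} ( e_α e_0† ⊗ G_α − e_0 e_α† ⊗ G_α† ), R² := Σ_{α∈S} G_α† G_α, U := exp(Ω), Ξ := I − (1/2) R² + (1/24)(R²)², Λ := I − (1/6) R². Let ξ_1, ξ_2 ∈ {0, +√3, −√3}, set ξ_3 := ξ_1² − 1, let α₀ := (1 + ξ_1² + ξ_3²/2 + ξ_2²)^{1/2}, and define the ancilla state m := (1/α₀)( e_0 + ξ_1 e_1 + (ξ_3/√2) e_2 + ξ_2 e_3 ). Define the post-selected effective map F̃ := α₀ · (m† ⊗ I_N) U (e_0 ⊗ I_N), i.e. F̃ = ⟨m| U |e_0⟩ / ⟨m|e_0⟩ as an N × N matrix. Then there exists a universal constant C > 0 such that, whenever g := max_α ‖G_α‖ ≤ 1: ‖ F̃ − [ Ξ + ξ_1 G_1 Λ + (ξ_3/√2) G_2 Λ + ξ_2 G_3 Λ ] ‖ ≤ C · g⁵. -/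

import Mathlib

open Matrix Kronecker

/-- The ℓ²→ℓ² operator norm of a complex matrix. -/
noncomputable def matOpNorm {n : Type*} [Fintype n] [DecidableEq n]
    (A : Matrix n n ℂ) : ℝ :=
  ‖Matrix.toEuclideanCLM (𝕜 := ℂ) A‖

noncomputable def repIntGen {S : Type*} [Fintype S] [DecidableEq S] {N : ℕ}
    (G : S → Matrix (Fin N) (Fin N) ℂ) :
    Matrix (Option S × Fin N) (Option S × Fin N) ℂ :=
  ∑ α : S,
    (Matrix.single (some α) (none : Option S) (1 : ℂ) ⊗ₖ G α -
      Matrix.single (none : Option S) (some α) (1 : ℂ) ⊗ₖ (G α)ᴴ)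

noncomputable def repIntR2 {S : Type*} [Fintype S] {N : ℕ}
    (G : S → Matrix (Fin N) (Fin N) ℂ) : Matrix (Fin N) (Fin N) ℂ :=
  ∑ α : S, (G α)ᴴ * G α

noncomputable def repIntXi {S : Type*} [Fintype S] {N : ℕ}
    (G : S → Matrix (Fin N) (Fin N) ℂ) : Matrix (Fin N) (Fin N) ℂ :=
  1 - (1 / 2 : ℂ) • repIntR2 G + (1 / 24 : ℂ) • (repIntR2 G * repIntR2 G)

noncomputable def repIntLam {S : Type*} [Fintype S] {N : ℕ}
    (G : S → Matrix (Fin N) (Fin N) ℂ) : Matrix (Fin N) (Fin N) ℂ :=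
  1 - (1 / 6 : ℂ) • repIntR2 G

noncomputable def gMax {S : Type*} [Fintype S] [Nonempty S] {N : ℕ}
    (G : S → Matrix (Fin N) (Fin N) ℂ) : ℝ :=
  Finset.univ.sup' Finset.univ_nonempty fun α => matOpNorm (G α)

/-- The normalization `α₀ := (1 + ξ₁² + ξ₃²/2 + ξ₂²)^{1/2}` with `ξ₃ := ξ₁² − 1`. -/
noncomputable def ancNormalization (ξ₁ ξ₂ : ℝ) : ℝ :=
  Real.sqrt (1 + ξ₁ ^ 2 + (ξ₁ ^ 2 - 1) ^ 2 / 2 + ξ₂ ^ 2)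

/-- The ancilla measurement state
`m := (1/α₀)(e_0 + ξ₁ e_1 + (ξ₃/√2) e_2 + ξ₂ e_3)` on `ℂ⁴ = ℂ^{Option (Fin 3)}`,
with `none ↔ e_0` and `some 0, some 1, some 2 ↔ e_1, e_2, e_3`. -/
noncomputable def ancState (ξ₁ ξ₂ : ℝ) : Option (Fin 3) → ℂ :=
  fun a =>
    (((match a with
      | none => 1
      | some i => if i = 0 then ξ₁ else if i = 1 then (ξ₁ ^ 2 - 1) / Real.sqrt 2 else ξ₂)
      / ancNormalization ξ₁ ξ₂ : ℝ) : ℂ)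

/-- The readout `m† ⊗ I_N` as a matrix. -/
noncomputable def ancReadout {N : ℕ} (ξ₁ ξ₂ : ℝ) :
    Matrix (Fin N) (Option (Fin 3) × Fin N) ℂ :=
  Matrix.of fun i p => star (ancState ξ₁ ξ₂ p.1) * (if p.2 = i then 1 else 0)

/-- The embedding `e_0 ⊗ I_N` as a matrix. -/
noncomputable def ancE0Embed {N : ℕ} :
    Matrix (Option (Fin 3) × Fin N) (Fin N) ℂ :=
  Matrix.of fun p i =>
    (match p.1 with | none => (1 : ℂ) | some _ => 0) * (if p.2 = i then 1 else 0)

/-- The post-selected effective one-step map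
`F̃ := α₀ · (m† ⊗ I_N) U (e_0 ⊗ I_N) = ⟨m|U|e_0⟩ / ⟨m|e_0⟩`. -/
noncomputable def effStep {N : ℕ} (G : Fin 3 → Matrix (Fin N) (Fin N) ℂ)
    (ξ₁ ξ₂ : ℝ) : Matrix (Fin N) (Fin N) ℂ :=
  ((ancNormalization ξ₁ ξ₂ : ℝ) : ℂ) •
    ((ancReadout ξ₁ ξ₂ * NormedSpace.exp (repIntGen G) :
      Matrix (Fin N) (Option (Fin 3) × Fin N) ℂ) * ancE0Embed)

/-! ### Auxiliary material -/


/-! ### Auxiliary lemmas -/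

open scoped Matrix.Norms.L2Operator

set_option linter.unusedSectionVars false

lemma matOpNorm_eq_norm {n : Type*} [Fintype n] [DecidableEq n] (A : Matrix n n ℂ) :
    matOpNorm A = ‖A‖ := rfl

section ExpTail

/-- Tail bound for the exponential series in a complex Banach algebra. -/
lemma exp_tail_bound {A : Type*} [NormedRing A] [NormedAlgebra ℂ A] [CompleteSpace A]
    (a : A) :
    ‖NormedSpace.exp a - ∑ k ∈ Finset.range 5, (k.factorial⁻¹ : ℂ) • a ^ k‖ ≤
      ‖a‖ ^ 5 * Real.exp ‖a‖ := by
  have hsum : Summable (fun k : ℕ => (k.factorial⁻¹ : ℂ) • a ^ k) :=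
    NormedSpace.expSeries_summable' a
  have hexp : NormedSpace.exp a = ∑' k : ℕ, (k.factorial⁻¹ : ℂ) • a ^ k :=
    congrFun (NormedSpace.exp_eq_tsum (𝕂 := ℂ)) a
  have hsplit := Summable.sum_add_tsum_nat_add (f := fun k : ℕ => (k.factorial⁻¹ : ℂ) • a ^ k) 5 hsum
  rw [hexp, ← hsplit, add_sub_cancel_left]
  have hnorm : ∀ k : ℕ, ‖(((k+5).factorial⁻¹ : ℂ)) • a ^ (k+5)‖ ≤ ‖a‖^5 * (‖a‖^k / k.factorial) := by
    intro k
    rw [norm_smul]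
    have h1 : ‖(((k+5).factorial⁻¹ : ℂ))‖ = ((k+5).factorial : ℝ)⁻¹ := by
      rw [norm_inv, Complex.norm_natCast]
    rw [h1]
    have h2 : ‖a ^ (k+5)‖ ≤ ‖a‖ ^ (k+5) := norm_pow_le' a (by omega)
    have h3 : ((k+5).factorial : ℝ)⁻¹ ≤ (k.factorial : ℝ)⁻¹ := by
      apply inv_anti₀
      · positivity
      · exact_mod_cast Nat.factorial_le (by omega)
    calc ((k+5).factorial : ℝ)⁻¹ * ‖a ^ (k+5)‖
        ≤ (k.factorial : ℝ)⁻¹ * ‖a‖ ^ (k+5) := by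
          apply mul_le_mul h3 h2 (norm_nonneg _) (by positivity)
      _ = ‖a‖^5 * (‖a‖^k / k.factorial) := by ring
  have hsum2 : Summable (fun k : ℕ => ‖a‖^5 * (‖a‖^k / k.factorial)) :=
    (Real.summable_pow_div_factorial ‖a‖).mul_left _
  calc ‖∑' k : ℕ, ((k+5).factorial⁻¹ : ℂ) • a ^ (k+5)‖
      ≤ ∑' k : ℕ, ‖a‖^5 * (‖a‖^k / k.factorial) :=
        tsum_of_norm_bounded hsum2.hasSum hnorm
    _ = ‖a‖^5 * ∑' k : ℕ, ‖a‖^k / k.factorial := tsum_mul_left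
    _ = ‖a‖^5 * Real.exp ‖a‖ := by
        rw [Real.exp_eq_exp_ℝ, NormedSpace.exp_eq_tsum_div]

end ExpTail

section NormBounds

lemma l2_opNorm_le_bound' {m' n' : Type*} [Fintype m'] [Fintype n'] [DecidableEq n']
    (A : Matrix m' n' ℂ) {c : ℝ} (hc : 0 ≤ c)
    (h : ∀ x : EuclideanSpace ℂ n',
      ‖(WithLp.equiv 2 (m' → ℂ)).symm (A *ᵥ (WithLp.equiv 2 (n' → ℂ)) x)‖ ≤ c * ‖x‖) :
    ‖A‖ ≤ c := by
  rw [Matrix.l2_opNorm_def]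
  refine ContinuousLinearMap.opNorm_le_bound _ hc fun x => ?_
  simpa [Matrix.toEuclideanLin_apply] using h x

lemma slice_norm_le {p n : Type*} [Fintype p] [Fintype n]
    (x : EuclideanSpace ℂ (p × n)) (b : p) :
    ‖((WithLp.equiv 2 (n → ℂ)).symm fun j => x (b, j))‖ ≤ ‖x‖ := by
  rw [EuclideanSpace.norm_eq, EuclideanSpace.norm_eq]
  apply Real.sqrt_le_sqrt
  have : (∑ j : n, ‖x (b, j)‖ ^ 2) ≤ ∑ q : p × n, ‖x q‖ ^ 2 := by
    rw [Fintype.sum_prod_type]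
    exact Finset.single_le_sum (f := fun d => ∑ j : n, ‖x (d, j)‖ ^ 2)
      (fun d _ => by positivity) (Finset.mem_univ b)
  simpa using this

lemma embed_norm_eq {p n : Type*} [Fintype p] [DecidableEq p] [Fintype n]
    (w : EuclideanSpace ℂ n) (a : p) :
    ‖((WithLp.equiv 2 (p × n → ℂ)).symm fun q => if q.1 = a then w q.2 else 0)‖ = ‖w‖ := by
  rw [EuclideanSpace.norm_eq, EuclideanSpace.norm_eq]
  congr 1
  rw [Fintype.sum_prod_type, Finset.sum_eq_single a]
  · simp
  · intro d _ hd; simp [hd]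
  · simp

lemma kron_std_norm_le {p n : Type*} [Fintype p] [DecidableEq p] [Fintype n] [DecidableEq n]
    (a b : p) (G : Matrix n n ℂ) :
    ‖Matrix.single a b (1 : ℂ) ⊗ₖ G‖ ≤ ‖G‖ := by
  apply l2_opNorm_le_bound' _ (norm_nonneg G)
  intro x
  have hvec : ((Matrix.single a b (1 : ℂ) ⊗ₖ G) *ᵥ (WithLp.equiv 2 (p × n → ℂ)) x)
      = fun q : p × n => if q.1 = a then (G *ᵥ fun j => x (b, j)) q.2 else 0 := by
    funext q
    obtain ⟨c', i⟩ := q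
    simp only [Matrix.mulVec, dotProduct, kroneckerMap_apply, Matrix.single,
      Matrix.of_apply, Fintype.sum_prod_type]
    by_cases hc : c' = a
    · subst hc
      simp [Finset.sum_ite_eq, Finset.mul_sum]
    · simp [Ne.symm hc, hc]
  rw [show ((WithLp.equiv 2 (p × n → ℂ)).symm
        ((Matrix.single a b (1 : ℂ) ⊗ₖ G) *ᵥ (WithLp.equiv 2 (p × n → ℂ)) x))
      = ((WithLp.equiv 2 (p × n → ℂ)).symm fun q : p × n =>
          if q.1 = a then (G *ᵥ fun j => x (b, j)) q.2 else 0) from congrArg _ hvec]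
  refine le_trans (le_of_eq
    (embed_norm_eq ((WithLp.equiv 2 (n → ℂ)).symm (G *ᵥ fun j => x (b, j))) a)) ?_
  calc ‖((WithLp.equiv 2 (n → ℂ)).symm (G *ᵥ fun j => x (b, j)))‖
      ≤ ‖G‖ * ‖((WithLp.equiv 2 (n → ℂ)).symm fun j => x (b, j))‖ :=
        Matrix.l2_opNorm_mulVec G ((WithLp.equiv 2 (n → ℂ)).symm fun j => x (b, j))
    _ ≤ ‖G‖ * ‖x‖ :=
        mul_le_mul_of_nonneg_left (slice_norm_le x b) (norm_nonneg G)

lemma anc_pos (ξ₁ ξ₂ : ℝ) : 0 < ancNormalization ξ₁ ξ₂ :=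
  Real.sqrt_pos.2 (by positivity)

lemma anc_sq (ξ₁ ξ₂ : ℝ) :
    ancNormalization ξ₁ ξ₂ ^ 2 = 1 + ξ₁ ^ 2 + (ξ₁ ^ 2 - 1) ^ 2 / 2 + ξ₂ ^ 2 :=
  Real.sq_sqrt (by positivity)

lemma anc_state_sum_sq (ξ₁ ξ₂ : ℝ) :
    ∑ a : Option (Fin 3), ‖ancState ξ₁ ξ₂ a‖ ^ 2 = 1 := by
  have hs := anc_sq ξ₁ ξ₂
  have hne : ancNormalization ξ₁ ξ₂ ≠ 0 := (anc_pos ξ₁ ξ₂).ne'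
  have h2 : ((ξ₁ ^ 2 - 1) / Real.sqrt 2) ^ 2 = (ξ₁ ^ 2 - 1) ^ 2 / 2 := by
    rw [div_pow, Real.sq_sqrt (by norm_num : (0:ℝ) ≤ 2)]
  simp only [Fintype.sum_option, Fin.sum_univ_three, ancState, Complex.norm_real, sq_abs]
  norm_num [Real.norm_eq_abs, sq_abs, div_pow, Fin.ext_iff]
  field_simp
  linear_combination (-2) * hs

lemma anc_embed_norm {N : ℕ} : ‖(ancE0Embed (N := N))‖ ≤ 1 := by
  apply l2_opNorm_le_bound' _ zero_le_one
  intro x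
  have hvec : (ancE0Embed *ᵥ (WithLp.equiv 2 (Fin N → ℂ)) x)
      = fun q : Option (Fin 3) × Fin N => if q.1 = none then x q.2 else 0 := by
    funext q
    obtain ⟨a, i⟩ := q
    cases a <;> simp [ancE0Embed, Matrix.mulVec, dotProduct]
  rw [hvec, one_mul]
  exact le_of_eq (embed_norm_eq x none)

lemma anc_readout_norm {N : ℕ} (ξ₁ ξ₂ : ℝ) : ‖(ancReadout (N := N) ξ₁ ξ₂)‖ ≤ 1 := by
  rw [← Matrix.l2_opNorm_conjTranspose]
  apply l2_opNorm_le_bound' _ zero_le_one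
  intro x
  have hvec : ((ancReadout ξ₁ ξ₂)ᴴ *ᵥ (WithLp.equiv 2 (Fin N → ℂ)) x)
      = fun q : Option (Fin 3) × Fin N => ancState ξ₁ ξ₂ q.1 * x q.2 := by
    funext q
    obtain ⟨a, i⟩ := q
    simp [ancReadout, Matrix.mulVec, dotProduct, Matrix.conjTranspose_apply,
      apply_ite (star : ℂ → ℂ), mul_comm]
  rw [hvec, one_mul]
  rw [EuclideanSpace.norm_eq, EuclideanSpace.norm_eq]
  simp only [WithLp.equiv_symm_apply, WithLp.ofLp_toLp]
  rw [show (∑ q : Option (Fin 3) × Fin N, ‖ancState ξ₁ ξ₂ q.1 * x q.2‖ ^ 2)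
      = (∑ a : Option (Fin 3), ‖ancState ξ₁ ξ₂ a‖ ^ 2) * ∑ j : Fin N, ‖x j‖ ^ 2 by
    rw [Fintype.sum_prod_type, Finset.sum_mul_sum]
    simp [norm_mul, mul_pow]]
  rw [anc_state_sum_sq, one_mul]

end NormBounds

section Blocks

variable {S : Type*} [Fintype S] [DecidableEq S] {N : ℕ}

/-- The `(a, e_0)` block of a big matrix. -/
def blk (a : Option S) (M : Matrix (Option S × Fin N) (Option S × Fin N) ℂ) :
    Matrix (Fin N) (Fin N) ℂ := of fun i j => M (a, i) (none, j)

lemma blk_none_one : blk (none : Option S) (1 : Matrix (Option S × Fin N) _ ℂ) = 1 := by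
  ext i j; simp [blk, Matrix.one_apply, Prod.ext_iff]

lemma blk_some_one (β : S) : blk (some β) (1 : Matrix (Option S × Fin N) _ ℂ) = 0 := by
  ext i j; simp [blk, Matrix.one_apply, Prod.ext_iff]

lemma blk_some_mul (G : S → Matrix (Fin N) (Fin N) ℂ) (β : S)
    (M : Matrix (Option S × Fin N) (Option S × Fin N) ℂ) :
    blk (some β) (repIntGen G * M) = G β * blk none M := by
  ext i j
  simp only [blk, repIntGen, Matrix.mul_apply, Matrix.of_apply, Matrix.sum_apply,
    Matrix.sub_apply, kroneckerMap_apply, Matrix.single, Matrix.of_apply,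
    Fintype.sum_prod_type, Fintype.sum_option]
  simp

lemma blk_none_mul (G : S → Matrix (Fin N) (Fin N) ℂ)
    (M : Matrix (Option S × Fin N) (Option S × Fin N) ℂ) :
    blk none (repIntGen G * M) = -∑ α : S, (G α)ᴴ * blk (some α) M := by
  ext i j
  simp only [blk, repIntGen, Matrix.mul_apply, Matrix.of_apply, Matrix.sum_apply,
    Matrix.sub_apply, Matrix.neg_apply, kroneckerMap_apply, Matrix.single,
    Fintype.sum_prod_type, Fintype.sum_option]
  simp [Finset.sum_comm (γ := S), Finset.mul_sum, Finset.sum_sub_distrib]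

lemma blk_none_pow0 (G : S → Matrix (Fin N) (Fin N) ℂ) : blk none (repIntGen G ^ 0) = 1 := by
  rw [pow_zero]; exact blk_none_one
lemma blk_some_pow0 (G : S → Matrix (Fin N) (Fin N) ℂ) (β : S) :
    blk (some β) (repIntGen G ^ 0) = 0 := by
  rw [pow_zero]; exact blk_some_one β
lemma blk_none_pow1 (G : S → Matrix (Fin N) (Fin N) ℂ) : blk none (repIntGen G ^ 1) = 0 := by
  rw [pow_succ', blk_none_mul]
  simp [blk_some_one]
lemma blk_some_pow1 (G : S → Matrix (Fin N) (Fin N) ℂ) (β : S) :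
    blk (some β) (repIntGen G ^ 1) = G β := by
  rw [pow_succ', blk_some_mul, blk_none_pow0, mul_one]
lemma blk_none_pow2 (G : S → Matrix (Fin N) (Fin N) ℂ) :
    blk none (repIntGen G ^ 2) = -repIntR2 G := by
  rw [pow_succ', blk_none_mul, repIntR2]
  congr 1
  exact Finset.sum_congr rfl fun α _ => by rw [blk_some_pow1]
lemma blk_some_pow2 (G : S → Matrix (Fin N) (Fin N) ℂ) (β : S) :
    blk (some β) (repIntGen G ^ 2) = 0 := by
  rw [pow_succ', blk_some_mul, blk_none_pow1, mul_zero]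
lemma blk_none_pow3 (G : S → Matrix (Fin N) (Fin N) ℂ) :
    blk none (repIntGen G ^ 3) = 0 := by
  rw [pow_succ', blk_none_mul]
  simp [blk_some_pow2]
lemma blk_some_pow3 (G : S → Matrix (Fin N) (Fin N) ℂ) (β : S) :
    blk (some β) (repIntGen G ^ 3) = -(G β * repIntR2 G) := by
  rw [pow_succ', blk_some_mul, blk_none_pow2, mul_neg]
lemma blk_none_pow4 (G : S → Matrix (Fin N) (Fin N) ℂ) :
    blk none (repIntGen G ^ 4) = repIntR2 G * repIntR2 G := by
  rw [pow_succ', blk_none_mul]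
  rw [show ∑ α : S, (G α)ᴴ * blk (some α) (repIntGen G ^ 3)
      = -((∑ α : S, (G α)ᴴ * G α) * repIntR2 G) by
    rw [Finset.sum_mul, ← Finset.sum_neg_distrib]
    exact Finset.sum_congr rfl fun α _ => by rw [blk_some_pow3, mul_neg, mul_assoc]]
  rw [neg_neg, repIntR2]
lemma blk_some_pow4 (G : S → Matrix (Fin N) (Fin N) ℂ) (β : S) :
    blk (some β) (repIntGen G ^ 4) = 0 := by
  rw [pow_succ', blk_some_mul, blk_none_pow3, mul_zero]

lemma blk_smul (a : Option S) (c : ℂ) (M : Matrix (Option S × Fin N) (Option S × Fin N) ℂ) :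
    blk a (c • M) = c • blk a M := rfl

lemma blk_sum {ι : Type*} (a : Option S) (s : Finset ι)
    (f : ι → Matrix (Option S × Fin N) (Option S × Fin N) ℂ) :
    blk a (∑ k ∈ s, f k) = ∑ k ∈ s, blk a (f k) := by
  ext i j
  simp [blk, Matrix.sum_apply]

end Blocks

section Identity

lemma star_ancState (ξ₁ ξ₂ : ℝ) (a : Option (Fin 3)) :
    star (ancState ξ₁ ξ₂ a) = ancState ξ₁ ξ₂ a := by
  cases a <;> simp [ancState]

lemma readout_mul_embed {N : ℕ} (ξ₁ ξ₂ : ℝ)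
    (M : Matrix (Option (Fin 3) × Fin N) (Option (Fin 3) × Fin N) ℂ) :
    ancReadout (N := N) ξ₁ ξ₂ * M * ancE0Embed (N := N) =
      ∑ a : Option (Fin 3), ancState ξ₁ ξ₂ a • blk a M := by
  ext i j
  simp only [Matrix.mul_apply, ancReadout, ancE0Embed, blk, Matrix.of_apply,
    Matrix.sum_apply, Matrix.smul_apply, Fintype.sum_prod_type, Fintype.sum_option,
    star_ancState, smul_eq_mul]
  simp [mul_comm, mul_ite, Finset.sum_ite_eq, Finset.sum_ite_eq']

lemma blk_none_trunc {N : ℕ} (G : Fin 3 → Matrix (Fin N) (Fin N) ℂ) :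
    blk none (∑ k ∈ Finset.range 5, (k.factorial⁻¹ : ℂ) • repIntGen G ^ k) = repIntXi G := by
  rw [blk_sum]
  simp only [blk_smul, Finset.sum_range_succ, Finset.sum_range_zero, zero_add]
  rw [blk_none_pow0, blk_none_pow1, blk_none_pow2, blk_none_pow3, blk_none_pow4, repIntXi]
  norm_num [Nat.factorial]
  module

lemma blk_some_trunc {N : ℕ} (G : Fin 3 → Matrix (Fin N) (Fin N) ℂ) (β : Fin 3) :
    blk (some β) (∑ k ∈ Finset.range 5, (k.factorial⁻¹ : ℂ) • repIntGen G ^ k) =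
      G β * repIntLam G := by
  rw [blk_sum]
  simp only [blk_smul, Finset.sum_range_succ, Finset.sum_range_zero, zero_add]
  rw [blk_some_pow0, blk_some_pow1, blk_some_pow2, blk_some_pow3, blk_some_pow4, repIntLam,
    mul_sub, mul_one, Matrix.mul_smul]
  norm_num [Nat.factorial]
  module

lemma key_identity {N : ℕ} (G : Fin 3 → Matrix (Fin N) (Fin N) ℂ) (ξ₁ ξ₂ : ℝ) :
    ((ancNormalization ξ₁ ξ₂ : ℝ) : ℂ) •
      (ancReadout (N := N) ξ₁ ξ₂ * (∑ k ∈ Finset.range 5, (k.factorial⁻¹ : ℂ) • repIntGen G ^ k) *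
        ancE0Embed (N := N)) =
      repIntXi G + ((ξ₁ : ℝ) : ℂ) • (G 0 * repIntLam G) +
        (((ξ₁ ^ 2 - 1) / Real.sqrt 2 : ℝ) : ℂ) • (G 1 * repIntLam G) +
        ((ξ₂ : ℝ) : ℂ) • (G 2 * repIntLam G) := by
  have hne : ((ancNormalization ξ₁ ξ₂ : ℝ) : ℂ) ≠ 0 :=
    Complex.ofReal_ne_zero.2 (anc_pos ξ₁ ξ₂).ne'
  have hcoef : ∀ r : ℝ, ((ancNormalization ξ₁ ξ₂ : ℝ) : ℂ) * ((r / ancNormalization ξ₁ ξ₂ : ℝ) : ℂ)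
      = (r : ℂ) := by
    intro r
    push_cast
    field_simp
  rw [readout_mul_embed]
  rw [Fintype.sum_option, Fin.sum_univ_three]
  rw [blk_none_trunc, blk_some_trunc, blk_some_trunc, blk_some_trunc]
  rw [smul_add, smul_add, smul_add, smul_smul, smul_smul, smul_smul, smul_smul]
  have e0 : ancState ξ₁ ξ₂ none = ((1 / ancNormalization ξ₁ ξ₂ : ℝ) : ℂ) := rfl
  have e1 : ancState ξ₁ ξ₂ (some 0) = ((ξ₁ / ancNormalization ξ₁ ξ₂ : ℝ) : ℂ) := by
    simp [ancState]
  have e2 : ancState ξ₁ ξ₂ (some 1) =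
      ((((ξ₁ ^ 2 - 1) / Real.sqrt 2) / ancNormalization ξ₁ ξ₂ : ℝ) : ℂ) := by
    simp [ancState]
  have e3 : ancState ξ₁ ξ₂ (some 2) = ((ξ₂ / ancNormalization ξ₁ ξ₂ : ℝ) : ℂ) := by
    simp [ancState]
  rw [e0, e1, e2, e3, hcoef, hcoef, hcoef, hcoef]
  push_cast
  module

lemma effStep_eq {N : ℕ} (G : Fin 3 → Matrix (Fin N) (Fin N) ℂ) (ξ₁ ξ₂ : ℝ) :
    effStep G ξ₁ ξ₂ = ((ancNormalization ξ₁ ξ₂ : ℝ) : ℂ) •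
      (ancReadout (N := N) ξ₁ ξ₂ * NormedSpace.exp (repIntGen G) * ancE0Embed (N := N)) := rfl

end Identity

/-- **Post-selected effective map of the two-qubit weak-measurement step.**
There is a universal constant `C > 0` such that whenever `g := max_α ‖G_α‖ ≤ 1` and
`ξ₁, ξ₂ ∈ {0, √3, −√3}`, with `ξ₃ := ξ₁² − 1`,
`‖F̃ − [Ξ + ξ₁ G₁Λ + (ξ₃/√2) G₂Λ + ξ₂ G₃Λ]‖ ≤ C g⁵`. -/
theorem effective_map_weak2 :
    ∃ C > 0, ∀ (N : ℕ) (G : Fin 3 → Matrix (Fin N) (Fin N) ℂ) (ξ₁ ξ₂ : ℝ),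
      ξ₁ ∈ ({0, Real.sqrt 3, -Real.sqrt 3} : Set ℝ) →
      ξ₂ ∈ ({0, Real.sqrt 3, -Real.sqrt 3} : Set ℝ) →
      gMax G ≤ 1 →
      matOpNorm
        (effStep G ξ₁ ξ₂ -
          (repIntXi G + ((ξ₁ : ℝ) : ℂ) • (G 0 * repIntLam G) +
            (((ξ₁ ^ 2 - 1) / Real.sqrt 2 : ℝ) : ℂ) • (G 1 * repIntLam G) +
            ((ξ₂ : ℝ) : ℂ) • (G 2 * repIntLam G))) ≤
        C * gMax G ^ 5 := by
  refine ⟨3 * 6 ^ 5 * Real.exp 6, by positivity, ?_⟩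
  intro N G ξ₁ ξ₂ h1 h2 hg
  set g : ℝ := gMax G with hgdef
  have hGle : ∀ α : Fin 3, ‖G α‖ ≤ g := fun α =>
    Finset.le_sup' (f := fun α => matOpNorm (G α)) (Finset.mem_univ α)
  have hg0 : 0 ≤ g := le_trans (norm_nonneg (G 0)) (hGle 0)
  -- norm of the generator
  have hΩ : ‖repIntGen G‖ ≤ 6 * g := by
    rw [repIntGen]
    refine le_trans (norm_sum_le _ _) ?_
    have hterm : ∀ α : Fin 3,
        ‖Matrix.single (some α) (none : Option (Fin 3)) (1 : ℂ) ⊗ₖ G α -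
          Matrix.single (none : Option (Fin 3)) (some α) (1 : ℂ) ⊗ₖ (G α)ᴴ‖ ≤ 2 * g := by
      intro α
      refine le_trans (norm_sub_le _ _) ?_
      have ha := kron_std_norm_le (some α) (none : Option (Fin 3)) (G α)
      have hb := kron_std_norm_le (none : Option (Fin 3)) (some α) ((G α)ᴴ)
      rw [Matrix.l2_opNorm_conjTranspose] at hb
      have := hGle α
      linarith
    calc ∑ α : Fin 3, ‖Matrix.single (some α) (none : Option (Fin 3)) (1 : ℂ) ⊗ₖ G α -
          Matrix.single (none : Option (Fin 3)) (some α) (1 : ℂ) ⊗ₖ (G α)ᴴ‖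
        ≤ ∑ _α : Fin 3, 2 * g := Finset.sum_le_sum fun α _ => hterm α
      _ = 6 * g := by simp; ring
  -- tail bound
  have htail := exp_tail_bound (repIntGen G)
  have htail2 : ‖NormedSpace.exp (repIntGen G) -
      ∑ k ∈ Finset.range 5, (k.factorial⁻¹ : ℂ) • repIntGen G ^ k‖ ≤
      6 ^ 5 * g ^ 5 * Real.exp 6 := by
    refine le_trans htail ?_
    have hp : ‖repIntGen G‖ ^ 5 ≤ (6 * g) ^ 5 :=
      pow_le_pow_left₀ (norm_nonneg _) hΩ 5
    have he : Real.exp ‖repIntGen G‖ ≤ Real.exp 6 :=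
      Real.exp_le_exp.2 (le_trans hΩ (by linarith))
    calc ‖repIntGen G‖ ^ 5 * Real.exp ‖repIntGen G‖
        ≤ (6 * g) ^ 5 * Real.exp 6 :=
          mul_le_mul hp he (Real.exp_pos _).le (by positivity)
      _ = 6 ^ 5 * g ^ 5 * Real.exp 6 := by ring
  -- α₀ ≤ 3
  have hx1 : ξ₁ ^ 2 ≤ 3 := by
    have h3 : Real.sqrt 3 ^ 2 = 3 := Real.sq_sqrt (by norm_num)
    rcases h1 with h | h | h <;> rw [h] <;> nlinarith [h3]
  have hx2 : ξ₂ ^ 2 ≤ 3 := by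
    have h3 : Real.sqrt 3 ^ 2 = 3 := Real.sq_sqrt (by norm_num)
    rcases h2 with h | h | h <;> rw [h] <;> nlinarith [h3]
  have hα3 : ancNormalization ξ₁ ξ₂ ≤ 3 := by
    rw [ancNormalization]
    rw [show (3 : ℝ) = Real.sqrt 9 by
      rw [show (9:ℝ) = 3 ^ 2 by norm_num, Real.sqrt_sq (by norm_num)]]
    apply Real.sqrt_le_sqrt
    nlinarith [sq_nonneg ξ₁, sq_nonneg ξ₂, sq_nonneg (ξ₁ ^ 2 - 1)]
  -- difference as a compressed remainder
  have hdiff : effStep G ξ₁ ξ₂ -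
      (repIntXi G + ((ξ₁ : ℝ) : ℂ) • (G 0 * repIntLam G) +
        (((ξ₁ ^ 2 - 1) / Real.sqrt 2 : ℝ) : ℂ) • (G 1 * repIntLam G) +
        ((ξ₂ : ℝ) : ℂ) • (G 2 * repIntLam G)) =
      ((ancNormalization ξ₁ ξ₂ : ℝ) : ℂ) •
        (ancReadout (N := N) ξ₁ ξ₂ *
          (NormedSpace.exp (repIntGen G) -
            ∑ k ∈ Finset.range 5, (k.factorial⁻¹ : ℂ) • repIntGen G ^ k) * ancE0Embed (N := N)) := by
    rw [← key_identity G ξ₁ ξ₂, effStep_eq, ← smul_sub, ← Matrix.sub_mul, ← Matrix.mul_sub]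
  rw [matOpNorm_eq_norm, hdiff]
  rw [norm_smul]
  have hnα : ‖((ancNormalization ξ₁ ξ₂ : ℝ) : ℂ)‖ = ancNormalization ξ₁ ξ₂ := by
    rw [Complex.norm_real, Real.norm_eq_abs, abs_of_pos (anc_pos ξ₁ ξ₂)]
  rw [hnα]
  have hb : ‖ancReadout (N := N) ξ₁ ξ₂ *
      (NormedSpace.exp (repIntGen G) -
        ∑ k ∈ Finset.range 5, (k.factorial⁻¹ : ℂ) • repIntGen G ^ k) * ancE0Embed (N := N)‖ ≤
      6 ^ 5 * g ^ 5 * Real.exp 6 := by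
    refine le_trans (Matrix.l2_opNorm_mul _ _) ?_
    have h1' : ‖ancReadout (N := N) ξ₁ ξ₂ *
        (NormedSpace.exp (repIntGen G) -
          ∑ k ∈ Finset.range 5, (k.factorial⁻¹ : ℂ) • repIntGen G ^ k)‖ ≤
        6 ^ 5 * g ^ 5 * Real.exp 6 := by
      refine le_trans (Matrix.l2_opNorm_mul _ _) ?_
      calc ‖ancReadout (N := N) ξ₁ ξ₂‖ *
            ‖NormedSpace.exp (repIntGen G) -
              ∑ k ∈ Finset.range 5, (k.factorial⁻¹ : ℂ) • repIntGen G ^ k‖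
          ≤ 1 * (6 ^ 5 * g ^ 5 * Real.exp 6) :=
            mul_le_mul (anc_readout_norm ξ₁ ξ₂) htail2 (norm_nonneg _) zero_le_one
        _ = 6 ^ 5 * g ^ 5 * Real.exp 6 := one_mul _
    calc ‖ancReadout (N := N) ξ₁ ξ₂ *
          (NormedSpace.exp (repIntGen G) -
            ∑ k ∈ Finset.range 5, (k.factorial⁻¹ : ℂ) • repIntGen G ^ k)‖ * ‖ancE0Embed (N := N)‖
        ≤ (6 ^ 5 * g ^ 5 * Real.exp 6) * 1 :=
          mul_le_mul h1' anc_embed_norm (norm_nonneg _) (by positivity)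
      _ = 6 ^ 5 * g ^ 5 * Real.exp 6 := mul_one _
  calc ancNormalization ξ₁ ξ₂ * ‖ancReadout (N := N) ξ₁ ξ₂ *
        (NormedSpace.exp (repIntGen G) -
          ∑ k ∈ Finset.range 5, (k.factorial⁻¹ : ℂ) • repIntGen G ^ k) * ancE0Embed (N := N)‖
      ≤ 3 * (6 ^ 5 * g ^ 5 * Real.exp 6) :=
        mul_le_mul hα3 hb (norm_nonneg _) (by norm_num)
    _ = 3 * 6 ^ 5 * Real.exp 6 * g ^ 5 := by ring
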